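/- arXiv:1110.4429 — 3 statements merged into one kernel-verified Lean document; each statement's English description precedes it below -/
import Mathlib

section
/- Let N > 6 be an integer and ζ = exp(2πi/N). Let r, s, c, d be integers with 0 < r ≤ N/2, 0 < s ≤ N/2, r ≠ s, and gcd(c,d) = 1. Put r* = μ(rc)·r·d and s* = μ(sc)·s·d. If {rc} = {sc}, then ζ^{r* − s*} ≠ 1. -/
open Complex

/-- ζ = exp(2πi/N), a primitive N-th root of unity. -/
noncomputable def zeta (N : ℤ) : ℂ := Complex.exp (2 * Real.pi * Complex.I / N)

/-- q = exp(2πiτ/N). -/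
noncomputable def qq (N : ℤ) (τ : ℂ) : ℂ := Complex.exp (2 * Real.pi * Complex.I * τ / N)

/-- {x}: the unique integer with 0 ≤ {x} ≤ N/2 and x ≡ ±{x} (mod N). -/
def br (N x : ℤ) : ℤ := min (x % N) (N - x % N)

/-- μ(x) ∈ {1,-1}: μ(x) = 1 if x ≡ 0 or N/2 (mod N); otherwise x ≡ μ(x){x} (mod N). -/
def mu (N x : ℤ) : ℤ := if 2 * (x % N) ≤ N then 1 else -1

/-- Weierstrass ℘-function relative to the lattice L_τ = ℤ + ℤτ. -/
noncomputable def wp (τ z : ℂ) : ℂ :=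
  1 / z ^ 2 + ∑' p : {p : ℤ × ℤ // p ≠ 0},
    (1 / (z - ((p.1.1 : ℂ) + (p.1.2 : ℂ) * τ)) ^ 2 - 1 / ((p.1.1 : ℂ) + (p.1.2 : ℂ) * τ) ^ 2)

/-- φ_s(τ) = (2πi)⁻² ℘(s/N; L_τ) − 1/12. -/
noncomputable def phi (N s : ℤ) (τ : ℂ) : ℂ :=
  (1 / (2 * Real.pi * Complex.I) ^ 2) * wp τ ((s : ℂ) / (N : ℂ)) - 1 / 12

/-- Λ_k(τ) = (℘(k/N;L_τ) − ℘(1/N;L_τ))/(℘(2/N;L_τ) − ℘(1/N;L_τ)). -/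
noncomputable def Lam (N k : ℤ) (τ : ℂ) : ℂ :=
  (wp τ ((k : ℂ) / (N : ℂ)) - wp τ (1 / (N : ℂ))) /
    (wp τ ((2 : ℂ) / (N : ℂ)) - wp τ (1 / (N : ℂ)))

/-- u_s = ζ^{s*} q^{{sc}} where s* = μ(sc)sd, for the lower row (c,d) of A. -/
noncomputable def uu (N s c d : ℤ) (τ : ℂ) : ℂ :=
  zeta N ^ (mu N (s * c) * s * d) * qq N τ ^ br N (s * c)


lemma mu_cases (N x : ℤ) : mu N x = 1 ∨ mu N x = -1 := by
  unfold mu; split <;> simp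

lemma key_dvd (N x : ℤ) (hN : 0 < N) : N ∣ mu N x * x - br N x := by
  unfold mu br
  have h1 : 0 ≤ x % N := Int.emod_nonneg x (by omega)
  have h2 : x % N < N := Int.emod_lt_of_pos x hN
  have hd := Int.emod_def x N
  split_ifs with hif
  · rw [min_eq_left (by omega)]
    exact ⟨x / N, by rw [hd]; ring⟩
  · rw [min_eq_right (by omega)]
    exact ⟨-(x / N) - 1, by rw [hd]; ring⟩

lemma zeta_prim (N : ℤ) (hN : 0 < N) : IsPrimitiveRoot (zeta N) N.toNat := by
  have h := Complex.isPrimitiveRoot_exp N.toNat (by omega)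
  have hcast : ((N.toNat : ℕ) : ℂ) = (N : ℂ) := by
    rw [← Int.cast_natCast, Int.toNat_of_nonneg hN.le]
  rwa [hcast] at h

/-- If {rc} = {sc} then ζ^{r*-s*} ≠ 1, where r* = μ(rc)rd, s* = μ(sc)sd. -/
theorem stmt0 (N r s c d : ℤ) (hN : 6 < N)
    (hr0 : 0 < r) (hr : 2 * r ≤ N) (hs0 : 0 < s) (hs : 2 * s ≤ N) (hrs : r ≠ s)
    (hcd : Int.gcd c d = 1)
    (h : br N (r * c) = br N (s * c)) :
    zeta N ^ (mu N (r * c) * r * d - mu N (s * c) * s * d) ≠ 1 := by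
  intro heq
  have hN0 : 0 < N := by omega
  have hprim := zeta_prim N hN0
  rw [hprim.zpow_eq_one_iff_dvd, Int.toNat_of_nonneg hN0.le] at heq
  -- heq : N ∣ mu N (r*c)*r*d - mu N (s*c)*s*d
  have h1 := key_dvd N (r * c) hN0
  have h2 := key_dvd N (s * c) hN0
  rw [h] at h1
  have hc : N ∣ (mu N (r * c) * r - mu N (s * c) * s) * c := by
    have h3 := dvd_sub h1 h2
    have e : (mu N (r * c) * r - mu N (s * c) * s) * c =
        (mu N (r * c) * (r * c) - br N (s * c)) - (mu N (s * c) * (s * c) - br N (s * c)) := by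
      ring
    rwa [e]
  have hd : N ∣ (mu N (r * c) * r - mu N (s * c) * s) * d := by
    have e : (mu N (r * c) * r - mu N (s * c) * s) * d =
        mu N (r * c) * r * d - mu N (s * c) * s * d := by ring
    rwa [e]
  obtain ⟨a, b, hab⟩ := Int.isCoprime_iff_gcd_eq_one.mpr hcd
  have ht : N ∣ mu N (r * c) * r - mu N (s * c) * s := by
    have e : mu N (r * c) * r - mu N (s * c) * s =
        a * ((mu N (r * c) * r - mu N (s * c) * s) * c) +
        b * ((mu N (r * c) * r - mu N (s * c) * s) * d) := by
      linear_combination (-(mu N (r * c) * r - mu N (s * c) * s)) * hab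
    rw [e]
    exact dvd_add (hc.mul_left a) (hd.mul_left b)
  obtain h1' | h1' := mu_cases N (r * c) <;> obtain h2' | h2' := mu_cases N (s * c) <;>
    rw [h1', h2'] at ht <;>
    · have h0 := Int.eq_zero_of_dvd_of_natAbs_lt_natAbs ht (by omega)
      omega
end

section
/- Let N > 6 be an integer and ζ = exp(2πi/N). Let r, s, c, d be integers with 0 < r ≤ N/2, 0 < s ≤ N/2, r ≠ s, and gcd(c,d) = 1. Put r* = μ(rc)·r·d and s* = μ(sc)·s·d. If {rc} = {sc} and this common value is 0 or N/2, then ζ^{r* + s*} ≠ 1. -/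
open Complex

lemma zeta_zpow_eq_one_iff (N : ℤ) (hN : 0 < N) (k : ℤ) :
    zeta N ^ k = 1 ↔ (N ∣ k) := by
  have hN0 : (N : ℂ) ≠ 0 := by exact_mod_cast hN.ne'
  have h2 : (2 * Real.pi * Complex.I : ℂ) ≠ 0 := by
    simp [Real.pi_ne_zero, Complex.I_ne_zero]
  have hz : zeta N ^ k = Complex.exp (k * (2 * Real.pi * Complex.I / N)) := by
    rw [zeta, Complex.exp_int_mul]
  rw [hz, Complex.exp_eq_one_iff]
  constructor
  · rintro ⟨n, hn⟩
    refine ⟨n, ?_⟩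
    field_simp at hn
    have : (k : ℂ) = N * n := mul_right_cancel₀ h2 (by linear_combination (2 * Real.pi * Complex.I) * hn)
    exact_mod_cast this
  · rintro ⟨n, hn⟩
    refine ⟨n, ?_⟩
    have : (k : ℂ) = N * n := by exact_mod_cast hn
    field_simp
    linear_combination this

/-- If {rc} = {sc} and this common value is 0 or N/2, then ζ^{r*+s*} ≠ 1. -/
theorem stmt1 (N r s c d : ℤ) (hN : 6 < N)
    (hr0 : 0 < r) (hr : 2 * r ≤ N) (hs0 : 0 < s) (hs : 2 * s ≤ N) (hrs : r ≠ s)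
    (hcd : Int.gcd c d = 1)
    (h : br N (r * c) = br N (s * c))
    (h0 : br N (r * c) = 0 ∨ 2 * br N (r * c) = N) :
    zeta N ^ (mu N (r * c) * r * d + mu N (s * c) * s * d) ≠ 1 := by
  intro heq
  have hNpos : 0 < N := by linarith
  rw [zeta_zpow_eq_one_iff N hNpos] at heq
  set a := (r * c) % N with ha_def
  set b := (s * c) % N with hb_def
  have ha0 : 0 ≤ a := Int.emod_nonneg _ hNpos.ne'
  have haN : a < N := Int.emod_lt_of_pos _ hNpos
  have hb0 : 0 ≤ b := Int.emod_nonneg _ hNpos.ne'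
  have hbN : b < N := Int.emod_lt_of_pos _ hNpos
  have hab : (a = 0 ∧ b = 0) ∨ (2 * a = N ∧ 2 * b = N) := by
    simp only [br, ← ha_def, ← hb_def, min_def] at h h0
    split_ifs at h h0 <;> omega
  have h2a : 2 * a ≤ N := by omega
  have h2b : 2 * b ≤ N := by omega
  have hmur : mu N (r * c) = 1 := by simp only [mu, ← ha_def]; rw [if_pos h2a]
  have hmus : mu N (s * c) = 1 := by simp only [mu, ← hb_def]; rw [if_pos h2b]
  rw [hmur, hmus, one_mul, one_mul] at heq
  -- heq : N ∣ r * d + s * d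
  obtain ⟨qr, hqr⟩ : ∃ q, r * c = N * q + a :=
    ⟨r * c / N, by have := Int.emod_add_mul_ediv (r * c) N; linarith⟩
  obtain ⟨qs, hqs⟩ : ∃ q, s * c = N * q + b :=
    ⟨s * c / N, by have := Int.emod_add_mul_ediv (s * c) N; linarith⟩
  have hsum : N ∣ (r + s) * c := by
    rcases hab with ⟨h1, h2⟩ | ⟨h1, h2⟩
    · exact ⟨qr + qs, by linear_combination hqr + hqs + h1 + h2⟩
    · have hNab : a + b = N := by omega
      exact ⟨qr + qs + 1, by linear_combination hqr + hqs + hNab⟩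
  have hsumd : N ∣ (r + s) * d := by
    obtain ⟨q, hq⟩ := heq
    exact ⟨q, by linear_combination hq⟩
  have hdvd : N ∣ r + s := by
    have hb := Int.gcd_eq_gcd_ab c d
    rw [hcd] at hb
    push_cast at hb
    have key : r + s = (r + s) * c * Int.gcdA c d + (r + s) * d * Int.gcdB c d := by
      linear_combination (r + s) * hb
    rw [key]
    exact dvd_add (hsum.mul_right _) (hsumd.mul_right _)
  have hlt : r + s < N := by
    rcases lt_or_ge (r + s) N with h' | h'
    · exact h'
    · exfalso; have : r = s := by omega
      exact hrs this
  have := Int.le_of_dvd (by linarith) hdvd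
  linarith
end

section
/- Let N > 6 and let c be an integer with {c} ≠ 0 and {2c} = {c}. Then N ≡ 0 (mod 3), {c} = {2c} = N/3, and μ(2c) = −μ(c). Moreover, for any integer k with gcd(k,3) = 1, one has {kc} = N/3 and μ(kc) = (k|3)·μ(c), where (k|3) denotes the Legendre symbol of k modulo 3. -/
open Complex

/-- if {c} ≠ 0 and {2c} = {c}, then 3 ∣ N, {c} = {2c} = N/3,
μ(2c) = −μ(c), and for every k with gcd(k,3) = 1, {kc} = N/3 and μ(kc) = (k|3)μ(c). -/
theorem stmt15 (N c : ℤ) (hN : 6 < N) (hc : br N c ≠ 0) (h2c : br N (2 * c) = br N c) :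
    3 ∣ N ∧ 3 * br N c = N ∧ 3 * br N (2 * c) = N ∧ mu N (2 * c) = -mu N c ∧
    ∀ k : ℤ, Int.gcd k 3 = 1 →
      3 * br N (k * c) = N ∧ mu N (k * c) = (@legendreSym 3 ⟨by norm_num⟩ k) * mu N c := by
  have hN0 : (0:ℤ) < N := by omega
  have hr0 : 0 ≤ c % N := Int.emod_nonneg c (by omega)
  have hrN : c % N < N := Int.emod_lt_of_pos c hN0
  have hmodc : ∀ a : ℤ, (a * c) % N = (a * (c % N)) % N := fun a =>
    Int.ModEq.mul_left a (Int.emod_emod_of_dvd c dvd_rfl).symm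
  have ht : ((2*c) % N = 2*(c % N) ∧ 2*(c % N) < N) ∨
      ((2*c) % N = 2*(c % N) - N ∧ N ≤ 2*(c % N)) := by
    rcases lt_or_ge (2*(c % N)) N with h|h
    · exact Or.inl ⟨by rw [hmodc]; exact Int.emod_eq_of_lt (by omega) h, h⟩
    · refine Or.inr ⟨?_, h⟩
      rw [hmodc]
      conv_lhs => rw [show 2*(c % N) = (2*(c % N) - N) + 1*N by ring]
      rw [Int.add_mul_emod_self_right]
      exact Int.emod_eq_of_lt (by omega) (by omega)
  simp only [br] at hc h2c ⊢
  have h3 : 3 * (c % N) = N ∨ 3 * (c % N) = 2 * N := by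
    rcases ht with ⟨h,h'⟩|⟨h,h'⟩ <;> omega
  obtain ⟨m, hm⟩ : (3:ℤ) ∣ N := by omega
  have hm2 : 2 < m := by omega
  have hmul : ∀ a : ℤ, (a * m) % N = (a % 3) * m := by
    intro a
    have h03 : 0 ≤ a % 3 := Int.emod_nonneg a (by norm_num)
    have h3' : a % 3 < 3 := Int.emod_lt_of_pos a (by norm_num)
    have ha : a * m = (a % 3) * m + (a / 3) * N := by
      rw [hm, show (a % 3) * m + (a / 3) * (3 * m) = (3 * (a / 3) + a % 3) * m by ring,
        Int.mul_ediv_add_emod a 3]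
    rw [ha, Int.add_mul_emod_self_right]
    exact Int.emod_eq_of_lt (by positivity) (by nlinarith)
  have hkey : (c % N = m ∧ (2*c) % N = 2*m) ∨ (c % N = 2*m ∧ (2*c) % N = m) := by
    rcases ht with ⟨h,h'⟩|⟨h,h'⟩ <;> omega
  refine ⟨⟨m, hm⟩, by omega, by omega, ?_, ?_⟩
  · rcases hkey with ⟨h1,h2⟩|⟨h1,h2⟩ <;> simp only [mu, h1, h2] <;> split_ifs <;> omega
  · intro k hk
    have hk3 : k % 3 = 1 ∨ k % 3 = 2 := by
      have hnd : ¬ ((3:ℤ) ∣ k) := by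
        intro h
        have h2 : (3:ℤ) ∣ (Int.gcd k 3 : ℤ) := Int.dvd_coe_gcd h dvd_rfl
        rw [hk] at h2
        norm_num at h2
      omega
    rcases hkey with ⟨h1,h2⟩|⟨h1,h2⟩
    · have hkc : (k*c) % N = (k % 3) * m := by rw [hmodc, h1, hmul]
      rcases hk3 with h4|h4 <;> rw [h4] at hkc
      · have hL : (@legendreSym 3 ⟨by norm_num⟩ k : ℤ) = 1 := by
          rw [legendreSym.mod 3 k, show ((3:ℕ):ℤ) = 3 from by norm_num, h4]; decide
        rw [hL]
        refine ⟨by omega, ?_⟩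
        simp only [mu, hkc, h1, one_mul]
      · have hL : (@legendreSym 3 ⟨by norm_num⟩ k : ℤ) = -1 := by
          rw [legendreSym.mod 3 k, show ((3:ℕ):ℤ) = 3 from by norm_num, h4]; decide
        rw [hL]
        refine ⟨by omega, ?_⟩
        simp only [mu, hkc, h1]
        split_ifs <;> omega
    · have hkc : (k*c) % N = ((2*k) % 3) * m := by
        rw [hmodc, h1, show k*(2*m) = (2*k)*m by ring, hmul]
      rcases hk3 with h4|h4
      · have h5 : (2*k) % 3 = 2 := by omega
        rw [h5] at hkc
        have hL : (@legendreSym 3 ⟨by norm_num⟩ k : ℤ) = 1 := by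
          rw [legendreSym.mod 3 k, show ((3:ℕ):ℤ) = 3 from by norm_num, h4]; decide
        rw [hL]
        refine ⟨by omega, ?_⟩
        simp only [mu, hkc, h1, one_mul]
      · have h5 : (2*k) % 3 = 1 := by omega
        rw [h5] at hkc
        have hL : (@legendreSym 3 ⟨by norm_num⟩ k : ℤ) = -1 := by
          rw [legendreSym.mod 3 k, show ((3:ℕ):ℤ) = 3 from by norm_num, h4]; decide
        rw [hL]
        refine ⟨by omega, ?_⟩
        simp only [mu, hkc, h1]
        split_ifs <;> omega
end
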